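/- Let q be an odd prime, set h = (q−1)/2, let B, K ≥ 0 be real numbers, let m₁, m₂ ∈ {0,1}, let e₁, e₂ be rationals with |e₁| ≤ 2B and |e₂| ≤ 2B, and let K₁, K₂ be integers with |K₁| ≤ K and |K₂| ≤ K. Then the multiplication noise E := (2/q)(m₁h + e₁ + qK₁)(m₂h + e₂ + qK₂) − m₁m₂h − q(m₁K₂ + m₂K₁ + 2K₁K₂) satisfies |E| ≤ 4B + 2(4B + 1)K + 8B²/q + 1. -/
import Mathlib

set_option maxHeartbeats 1000000


/-- Bound on the homomorphic multiplication noise: with `h = (q-1)/2`,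
`|e₁|, |e₂| ≤ 2B`, `|K₁|, |K₂| ≤ K`, the noise
`E = (2/q)(m₁h + e₁ + qK₁)(m₂h + e₂ + qK₂) - m₁m₂h - q(m₁K₂ + m₂K₁ + 2K₁K₂)`
satisfies `|E| ≤ 4B + 2(4B+1)K + 8B²/q + 1`. -/
theorem stmt_11 (q : ℕ) (hq : q.Prime) (hodd : Odd q)
    (B K : ℝ) (hB : 0 ≤ B) (hK : 0 ≤ K)
    (m₁ m₂ : ℤ) (hm₁ : m₁ = 0 ∨ m₁ = 1) (hm₂ : m₂ = 0 ∨ m₂ = 1)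
    (e₁ e₂ : ℚ) (he₁ : |(e₁ : ℝ)| ≤ 2 * B) (he₂ : |(e₂ : ℝ)| ≤ 2 * B)
    (K₁ K₂ : ℤ) (hK₁ : |(K₁ : ℝ)| ≤ K) (hK₂ : |(K₂ : ℝ)| ≤ K)
    (h E : ℝ) (hh : h = ((q : ℝ) - 1) / 2)
    (hE : E = (2 / (q : ℝ)) * (((m₁ : ℝ) * h + (e₁ : ℝ) + (q : ℝ) * (K₁ : ℝ)) *
          ((m₂ : ℝ) * h + (e₂ : ℝ) + (q : ℝ) * (K₂ : ℝ))) -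
        (m₁ : ℝ) * (m₂ : ℝ) * h -
        (q : ℝ) * ((m₁ : ℝ) * (K₂ : ℝ) + (m₂ : ℝ) * (K₁ : ℝ) + 2 * (K₁ : ℝ) * (K₂ : ℝ))) :
    |E| ≤ 4 * B + 2 * (4 * B + 1) * K + 8 * B ^ 2 / (q : ℝ) + 1 := by
  have hq2 : q ≠ 2 := by
    rintro rfl; exact (by decide : ¬ Odd 2) hodd
  have hq3 : 3 ≤ q := by
    have := hq.two_le
    omega
  have hq3' : (3:ℝ) ≤ (q:ℝ) := by exact_mod_cast hq3
  have hq0 : (0:ℝ) < (q:ℝ) := by linarith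
  set u : ℝ := ((q:ℝ))⁻¹ with hu_def
  have hu : u * (q:ℝ) = 1 := inv_mul_cancel₀ hq0.ne'
  have hu0 : 0 < u := by positivity
  have hu3 : u ≤ 1/3 := by nlinarith
  have hm1a : (0:ℝ) ≤ (m₁:ℝ) ∧ (m₁:ℝ) ≤ 1 := by
    rcases hm₁ with rfl | rfl <;> norm_num
  have hm2a : (0:ℝ) ≤ (m₂:ℝ) ∧ (m₂:ℝ) ≤ 1 := by
    rcases hm₂ with rfl | rfl <;> norm_num
  obtain ⟨hm10, hm11⟩ := hm1a
  obtain ⟨hm20, hm21⟩ := hm2a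
  obtain ⟨he1l, he1u⟩ := abs_le.mp he₁
  obtain ⟨he2l, he2u⟩ := abs_le.mp he₂
  obtain ⟨hK1l, hK1u⟩ := abs_le.mp hK₁
  obtain ⟨hK2l, hK2u⟩ := abs_le.mp hK₂
  have hEeq : E = -((m₁:ℝ)*(m₂:ℝ))*(1-u)/2 + (1-u)*((m₁:ℝ)*(e₂:ℝ)+(m₂:ℝ)*(e₁:ℝ))
      + 2*u*(e₁:ℝ)*(e₂:ℝ) + 2*((e₁:ℝ)*(K₂:ℝ)+(e₂:ℝ)*(K₁:ℝ))
      - ((m₁:ℝ)*(K₂:ℝ)+(m₂:ℝ)*(K₁:ℝ)) := by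
    rw [hE, hh, hu_def]
    field_simp
    ring
  have hrhs : 8 * B ^ 2 / (q:ℝ) = 8 * B ^ 2 * u := by
    rw [div_eq_mul_inv]
  have hT1 : |(-((m₁:ℝ)*(m₂:ℝ))*(1-u)/2)| ≤ 1/2 := by
    have hmm0 : (0:ℝ) ≤ (m₁:ℝ)*(m₂:ℝ) := mul_nonneg hm10 hm20
    have hmm1 : (m₁:ℝ)*(m₂:ℝ) ≤ 1 := by nlinarith
    rw [abs_le]
    constructor <;> nlinarith
  have hT2 : |(1-u)*((m₁:ℝ)*(e₂:ℝ)+(m₂:ℝ)*(e₁:ℝ))| ≤ 4*B := by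
    rw [abs_mul]
    have h1 : |(1:ℝ)-u| ≤ 1 := by rw [abs_le]; constructor <;> linarith
    have h2 : |(m₁:ℝ)*(e₂:ℝ)+(m₂:ℝ)*(e₁:ℝ)| ≤ 4*B := by
      calc |(m₁:ℝ)*(e₂:ℝ)+(m₂:ℝ)*(e₁:ℝ)| ≤ |(m₁:ℝ)*(e₂:ℝ)| + |(m₂:ℝ)*(e₁:ℝ)| := abs_add_le _ _
        _ = |(m₁:ℝ)| * |(e₂:ℝ)| + |(m₂:ℝ)| * |(e₁:ℝ)| := by rw [abs_mul, abs_mul]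
        _ ≤ 1*(2*B) + 1*(2*B) := by
            gcongr
            · rw [abs_le]; constructor <;> linarith
            · rw [abs_le]; constructor <;> linarith
        _ = 4*B := by ring
    calc |(1:ℝ)-u| * |(m₁:ℝ)*(e₂:ℝ)+(m₂:ℝ)*(e₁:ℝ)| ≤ 1 * (4*B) := by
          apply mul_le_mul h1 h2 (abs_nonneg _) (by norm_num)
      _ = 4*B := by ring
  have hT3 : |2*u*(e₁:ℝ)*(e₂:ℝ)| ≤ 8*B^2*u := by
    have : |2*u*(e₁:ℝ)*(e₂:ℝ)| = 2*u*(|(e₁:ℝ)| * |(e₂:ℝ)|) := by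
      rw [abs_mul, abs_mul, abs_mul]
      rw [abs_of_nonneg (by norm_num : (0:ℝ) ≤ 2), abs_of_nonneg hu0.le]
      ring
    rw [this]
    nlinarith [abs_nonneg (e₁:ℝ), abs_nonneg (e₂:ℝ),
      mul_le_mul he₁ he₂ (abs_nonneg _) (by linarith)]
  have hT4 : |2*((e₁:ℝ)*(K₂:ℝ)+(e₂:ℝ)*(K₁:ℝ))| ≤ 8*B*K := by
    rw [abs_mul, abs_of_nonneg (by norm_num : (0:ℝ) ≤ 2)]
    have h2 : |(e₁:ℝ)*(K₂:ℝ)+(e₂:ℝ)*(K₁:ℝ)| ≤ 4*B*K := by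
      calc |(e₁:ℝ)*(K₂:ℝ)+(e₂:ℝ)*(K₁:ℝ)| ≤ |(e₁:ℝ)*(K₂:ℝ)| + |(e₂:ℝ)*(K₁:ℝ)| := abs_add_le _ _
        _ = |(e₁:ℝ)| * |(K₂:ℝ)| + |(e₂:ℝ)| * |(K₁:ℝ)| := by rw [abs_mul, abs_mul]
        _ ≤ (2*B)*K + (2*B)*K := by
            gcongr <;> first | exact abs_nonneg _ | assumption
        _ = 4*B*K := by ring
    linarith
  have hT5 : |((m₁:ℝ)*(K₂:ℝ)+(m₂:ℝ)*(K₁:ℝ))| ≤ 2*K := by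
    calc |(m₁:ℝ)*(K₂:ℝ)+(m₂:ℝ)*(K₁:ℝ)| ≤ |(m₁:ℝ)*(K₂:ℝ)| + |(m₂:ℝ)*(K₁:ℝ)| := abs_add_le _ _
      _ = |(m₁:ℝ)| * |(K₂:ℝ)| + |(m₂:ℝ)| * |(K₁:ℝ)| := by rw [abs_mul, abs_mul]
      _ ≤ 1*K + 1*K := by
          gcongr
          · rw [abs_le]; constructor <;> linarith
          · rw [abs_le]; constructor <;> linarith
      _ = 2*K := by ring
  have habs : |E| ≤ 1/2 + 4*B + 8*B^2*u + 8*B*K + 2*K := by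
    rw [hEeq]
    calc |(-((m₁:ℝ)*(m₂:ℝ))*(1-u)/2 + (1-u)*((m₁:ℝ)*(e₂:ℝ)+(m₂:ℝ)*(e₁:ℝ))
          + 2*u*(e₁:ℝ)*(e₂:ℝ) + 2*((e₁:ℝ)*(K₂:ℝ)+(e₂:ℝ)*(K₁:ℝ))
          - ((m₁:ℝ)*(K₂:ℝ)+(m₂:ℝ)*(K₁:ℝ)))|
        ≤ |(-((m₁:ℝ)*(m₂:ℝ))*(1-u)/2 + (1-u)*((m₁:ℝ)*(e₂:ℝ)+(m₂:ℝ)*(e₁:ℝ))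
          + 2*u*(e₁:ℝ)*(e₂:ℝ) + 2*((e₁:ℝ)*(K₂:ℝ)+(e₂:ℝ)*(K₁:ℝ)))|
          + |((m₁:ℝ)*(K₂:ℝ)+(m₂:ℝ)*(K₁:ℝ))| := abs_sub _ _
      _ ≤ |(-((m₁:ℝ)*(m₂:ℝ))*(1-u)/2 + (1-u)*((m₁:ℝ)*(e₂:ℝ)+(m₂:ℝ)*(e₁:ℝ))
          + 2*u*(e₁:ℝ)*(e₂:ℝ))| + |2*((e₁:ℝ)*(K₂:ℝ)+(e₂:ℝ)*(K₁:ℝ))|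
          + |((m₁:ℝ)*(K₂:ℝ)+(m₂:ℝ)*(K₁:ℝ))| := by gcongr; exact abs_add_le _ _
      _ ≤ |(-((m₁:ℝ)*(m₂:ℝ))*(1-u)/2 + (1-u)*((m₁:ℝ)*(e₂:ℝ)+(m₂:ℝ)*(e₁:ℝ)))|
          + |2*u*(e₁:ℝ)*(e₂:ℝ)| + |2*((e₁:ℝ)*(K₂:ℝ)+(e₂:ℝ)*(K₁:ℝ))|
          + |((m₁:ℝ)*(K₂:ℝ)+(m₂:ℝ)*(K₁:ℝ))| := by gcongr; exact abs_add_le _ _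
      _ ≤ |(-((m₁:ℝ)*(m₂:ℝ))*(1-u)/2)| + |(1-u)*((m₁:ℝ)*(e₂:ℝ)+(m₂:ℝ)*(e₁:ℝ))|
          + |2*u*(e₁:ℝ)*(e₂:ℝ)| + |2*((e₁:ℝ)*(K₂:ℝ)+(e₂:ℝ)*(K₁:ℝ))|
          + |((m₁:ℝ)*(K₂:ℝ)+(m₂:ℝ)*(K₁:ℝ))| := by gcongr; exact abs_add_le _ _
      _ ≤ 1/2 + 4*B + 8*B^2*u + 8*B*K + 2*K := by linarith
  rw [hrhs]
  linarith
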